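/- Equivariance of the splitting maps under a lifted linear symmetry: let n ∈ ℕ; let M, D : ℝⁿ → Matrix (Fin n) (Fin n) ℝ with M(q) symmetric positive definite and D(q) symmetric for all q; let V : ℝⁿ → ℝ be C¹; let ε ≥ 0 and τ ∈ ℝ. Let S be an invertible n×n real matrix with Sᵀ M(S q) S = M(q), Sᵀ D(S q) S = D(q), and V(S q) = V(q) for all q, and let Λ(q,p) = (S q, (Sᵀ)⁻¹ p). Then Λ commutes with each of the following maps of ℝⁿ × ℝⁿ: (i) the drift map (q,p) ↦ (q + τ • M(q)⁻¹ p, p); (ii) the kick map (q,p) ↦ (q, p − τ • ∇V(q)); (iii) the dissipative map (q,p) ↦ (q, exp(−τ ε D(q) M(q)⁻¹) p), where exp is the matrix exponential. In particular the composed splitting integrators commute with Λ. -/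

import Mathlib

open scoped RealInnerProductSpace
open Matrix

/-- Action of an `n × n` real matrix on a vector in `EuclideanSpace ℝ (Fin n)`. -/
noncomputable def mApp {n : ℕ} (A : Matrix (Fin n) (Fin n) ℝ)
    (v : EuclideanSpace ℝ (Fin n)) : EuclideanSpace ℝ (Fin n) :=
  Matrix.toEuclideanLin A v

/-- The drift map `(q,p) ↦ (q + τ M(q)⁻¹ p, p)`. -/
noncomputable def driftMap {n : ℕ} (τ : ℝ)
    (M : EuclideanSpace ℝ (Fin n) → Matrix (Fin n) (Fin n) ℝ)
    (z : EuclideanSpace ℝ (Fin n) × EuclideanSpace ℝ (Fin n)) :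
    EuclideanSpace ℝ (Fin n) × EuclideanSpace ℝ (Fin n) :=
  (z.1 + τ • mApp ((M z.1)⁻¹) z.2, z.2)

/-- The kick map `(q,p) ↦ (q, p - τ ∇V(q))`. -/
noncomputable def kickMap {n : ℕ} (τ : ℝ)
    (V : EuclideanSpace ℝ (Fin n) → ℝ)
    (z : EuclideanSpace ℝ (Fin n) × EuclideanSpace ℝ (Fin n)) :
    EuclideanSpace ℝ (Fin n) × EuclideanSpace ℝ (Fin n) :=
  (z.1, z.2 - τ • gradient V z.1)

/-- The dissipative map `(q,p) ↦ (q, exp(-τ ε D(q) M(q)⁻¹) p)`. -/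
noncomputable def dissMap {n : ℕ} (τ ε : ℝ)
    (M D : EuclideanSpace ℝ (Fin n) → Matrix (Fin n) (Fin n) ℝ)
    (z : EuclideanSpace ℝ (Fin n) × EuclideanSpace ℝ (Fin n)) :
    EuclideanSpace ℝ (Fin n) × EuclideanSpace ℝ (Fin n) :=
  (z.1, mApp (NormedSpace.exp ((-(τ * ε)) • (D z.1 * (M z.1)⁻¹))) z.2)

/-- The cotangent lift `Λ(q,p) = (S q, (Sᵀ)⁻¹ p)` of the linear map `q ↦ S q`. -/
noncomputable def liftedAction {n : ℕ} (S : Matrix (Fin n) (Fin n) ℝ)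
    (z : EuclideanSpace ℝ (Fin n) × EuclideanSpace ℝ (Fin n)) :
    EuclideanSpace ℝ (Fin n) × EuclideanSpace ℝ (Fin n) :=
  (mApp S z.1, mApp ((Sᵀ)⁻¹) z.2)

lemma mApp_mul {n : ℕ} (A B : Matrix (Fin n) (Fin n) ℝ) (v : EuclideanSpace ℝ (Fin n)) :
    mApp (A * B) v = mApp A (mApp B v) := by
  simp [mApp, Matrix.toEuclideanLin_apply, Matrix.mulVec_mulVec]

lemma mApp_one {n : ℕ} (v : EuclideanSpace ℝ (Fin n)) : mApp (1 : Matrix (Fin n) (Fin n) ℝ) v = v := by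
  simp [mApp, Matrix.toEuclideanLin_apply, Matrix.one_mulVec]

lemma mApp_adjoint {n : ℕ} (A : Matrix (Fin n) (Fin n) ℝ)
    (g v : EuclideanSpace ℝ (Fin n)) : ⟪mApp Aᵀ g, v⟫ = ⟪g, mApp A v⟫ := by
  have h : Aᵀ = Aᴴ := by ext i j; simp [Matrix.conjTranspose_apply]
  rw [mApp, h, Matrix.toEuclideanLin_conjTranspose_eq_adjoint]
  exact LinearMap.adjoint_inner_left _ _ _

lemma gradient_invariant {n : ℕ} (V : EuclideanSpace ℝ (Fin n) → ℝ)
    (hV : ContDiff ℝ 1 V) (S : Matrix (Fin n) (Fin n) ℝ) (hS : IsUnit S)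
    (hVinv : ∀ x : EuclideanSpace ℝ (Fin n), V (mApp S x) = V x)
    (q : EuclideanSpace ℝ (Fin n)) :
    gradient V (mApp S q) = mApp ((Sᵀ)⁻¹) (gradient V q) := by
  have hSd : IsUnit S.det := (Matrix.isUnit_iff_isUnit_det S).1 hS
  have hStd : IsUnit (Sᵀ).det := by rwa [Matrix.det_transpose]
  set L : EuclideanSpace ℝ (Fin n) →L[ℝ] EuclideanSpace ℝ (Fin n) :=
    LinearMap.toContinuousLinearMap (Matrix.toEuclideanLin S) with hL
  have hLapp : ∀ v, L v = mApp S v := fun v => rfl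
  have hdiff : DifferentiableAt ℝ V (mApp S q) :=
    (hV.differentiable one_ne_zero).differentiableAt
  have hcomp : HasFDerivAt (fun x => V (mApp S x))
      ((fderiv ℝ V (mApp S q)).comp L) q := by
    exact (hdiff.hasFDerivAt).comp q (L.hasFDerivAt)
  have hVeq : (fun x => V (mApp S x)) = V := funext hVinv
  have hfd : fderiv ℝ V q = (fderiv ℝ V (mApp S q)).comp L := by
    have h := hcomp.fderiv
    rwa [hVeq] at h
  have key : gradient V q = mApp Sᵀ (gradient V (mApp S q)) := by
    apply ext_inner_right ℝ
    intro v
    rw [mApp_adjoint]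
    have h1 : ⟪gradient V q, v⟫ = fderiv ℝ V q v := by
      simp only [gradient]
      rw [InnerProductSpace.toDual_symm_apply]
    have h2 : ⟪gradient V (mApp S q), mApp S v⟫ = fderiv ℝ V (mApp S q) (mApp S v) := by
      simp only [gradient]
      rw [InnerProductSpace.toDual_symm_apply]
    rw [h1, h2, hfd]
    rfl
  rw [key, ← mApp_mul, Matrix.nonsing_inv_mul _ hStd, mApp_one]

/-- Equivariance of the splitting maps under a lifted linear symmetry: if the metric `M`,
the dissipation tensor `D` and the potential `V` are invariant under the cotangent-lifted
action `Λ(q,p) = (S q, (Sᵀ)⁻¹ p)` of an invertible matrix `S`, then `Λ` commutes with the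
drift, kick, and dissipative maps; hence with the composed splitting integrators. -/
theorem splitting_maps_equivariant (n : ℕ)
    (M D : EuclideanSpace ℝ (Fin n) → Matrix (Fin n) (Fin n) ℝ)
    (hMpd : ∀ q, (M q).PosDef) (hDsym : ∀ q, (D q).IsSymm)
    (V : EuclideanSpace ℝ (Fin n) → ℝ) (hV : ContDiff ℝ 1 V)
    (ε τ : ℝ) (hε : 0 ≤ ε)
    (S : Matrix (Fin n) (Fin n) ℝ) (hS : IsUnit S)
    (hMinv : ∀ x : EuclideanSpace ℝ (Fin n), Sᵀ * M (mApp S x) * S = M x)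
    (hDinv : ∀ x : EuclideanSpace ℝ (Fin n), Sᵀ * D (mApp S x) * S = D x)
    (hVinv : ∀ x : EuclideanSpace ℝ (Fin n), V (mApp S x) = V x) :
    liftedAction S ∘ driftMap τ M = driftMap τ M ∘ liftedAction S ∧
    liftedAction S ∘ kickMap τ V = kickMap τ V ∘ liftedAction S ∧
    liftedAction S ∘ dissMap τ ε M D = dissMap τ ε M D ∘ liftedAction S := by
  have hSd : IsUnit S.det := (Matrix.isUnit_iff_isUnit_det S).1 hS
  have hStd : IsUnit (Sᵀ).det := by rwa [Matrix.det_transpose]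
  -- key inverse identity : (M q)⁻¹ = S⁻¹ * (M (S q))⁻¹ * (Sᵀ)⁻¹
  have hMinv' : ∀ q : EuclideanSpace ℝ (Fin n),
      (M q)⁻¹ = S⁻¹ * (M (mApp S q))⁻¹ * (Sᵀ)⁻¹ := by
    intro q
    rw [← hMinv q, Matrix.mul_inv_rev, Matrix.mul_inv_rev]
    rw [Matrix.mul_assoc]
  refine ⟨?_, ?_, ?_⟩
  · funext z
    obtain ⟨q, p⟩ := z
    simp only [Function.comp_apply, driftMap, liftedAction]
    refine Prod.ext ?_ rfl
    show mApp S (q + τ • mApp ((M q)⁻¹) p) =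
      mApp S q + τ • mApp ((M (mApp S q))⁻¹) (mApp ((Sᵀ)⁻¹) p)
    have hkey : S * (M q)⁻¹ = (M (mApp S q))⁻¹ * (Sᵀ)⁻¹ := by
      rw [hMinv' q, ← Matrix.mul_assoc, ← Matrix.mul_assoc,
        Matrix.mul_nonsing_inv _ hSd, Matrix.one_mul]
    calc mApp S (q + τ • mApp ((M q)⁻¹) p)
        = mApp S q + τ • mApp S (mApp ((M q)⁻¹) p) := by
          simp [mApp, map_add, _root_.map_smul]
      _ = mApp S q + τ • mApp ((M (mApp S q))⁻¹) (mApp ((Sᵀ)⁻¹) p) := by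
          rw [← mApp_mul, hkey, mApp_mul]
  · funext z
    obtain ⟨q, p⟩ := z
    simp only [Function.comp_apply, kickMap, liftedAction]
    refine Prod.ext rfl ?_
    show mApp ((Sᵀ)⁻¹) (p - τ • gradient V q) =
      mApp ((Sᵀ)⁻¹) p - τ • gradient V (mApp S q)
    rw [gradient_invariant V hV S hS hVinv q]
    simp [mApp, map_sub, _root_.map_smul]
  · funext z
    obtain ⟨q, p⟩ := z
    simp only [Function.comp_apply, dissMap, liftedAction]
    refine Prod.ext rfl ?_
    show mApp ((Sᵀ)⁻¹) (mApp (NormedSpace.exp ((-(τ * ε)) • (D q * (M q)⁻¹))) p) =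
      mApp (NormedSpace.exp ((-(τ * ε)) • (D (mApp S q) * (M (mApp S q))⁻¹)))
        (mApp ((Sᵀ)⁻¹) p)
    have hDM : D q * (M q)⁻¹ =
        Sᵀ * (D (mApp S q) * (M (mApp S q))⁻¹) * (Sᵀ)⁻¹ := by
      rw [← hDinv q, hMinv' q]
      have : S * S⁻¹ = 1 := Matrix.mul_nonsing_inv _ hSd
      calc Sᵀ * D (mApp S q) * S * (S⁻¹ * (M (mApp S q))⁻¹ * (Sᵀ)⁻¹)
          = Sᵀ * D (mApp S q) * (S * S⁻¹) * (M (mApp S q))⁻¹ * (Sᵀ)⁻¹ := by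
            noncomm_ring
        _ = Sᵀ * (D (mApp S q) * (M (mApp S q))⁻¹) * (Sᵀ)⁻¹ := by
            rw [this]; noncomm_ring
    have hsmul : (-(τ * ε)) • (D q * (M q)⁻¹) =
        Sᵀ * ((-(τ * ε)) • (D (mApp S q) * (M (mApp S q))⁻¹)) * (Sᵀ)⁻¹ := by
      rw [hDM, Matrix.mul_smul, Matrix.smul_mul]
    have hfinal : (Sᵀ)⁻¹ * NormedSpace.exp ((-(τ * ε)) • (D q * (M q)⁻¹)) =
        NormedSpace.exp ((-(τ * ε)) • (D (mApp S q) * (M (mApp S q))⁻¹)) * (Sᵀ)⁻¹ := by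
      rw [hsmul, Matrix.exp_conj _ _ ((Matrix.isUnit_iff_isUnit_det _).2 hStd),
        ← Matrix.mul_assoc, ← Matrix.mul_assoc, Matrix.nonsing_inv_mul _ hStd,
        Matrix.one_mul]
    rw [← mApp_mul, hfinal, mApp_mul]
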